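/- Let G be a digraph on {1,…,n} and P_π̃ the weighted poset induced by G, with associated map φ_π̃ : 𝔽₂ⁿ → 𝔽₂^m. Then for every x ∈ 𝔽₂ⁿ, w_G(x) = w_{P_π̃}(x^{φ_π̃}). Equivalently, ⟨x⟩_G equals the union of the equivalence classes belonging to ⟨x^{φ_π̃}⟩_{P_π̃}. -/

import Mathlib

open Classical

noncomputable def wtP {α : Type*} [Fintype α] (le : α → α → Prop) (π : α → ℕ)
    (x : α → ZMod 2) : ℕ :=
  ∑ j ∈ Finset.univ.filter (fun j => ∃ i, x i ≠ 0 ∧ le j i), π j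

noncomputable def wtG {V : Type*} [Fintype V] (E : V → V → Prop) (x : V → ZMod 2) : ℕ :=
  (Finset.univ.filter (fun v => ∃ u, x u ≠ 0 ∧ Relation.ReflTransGen E u v)).card

def sim {V : Type*} (E : V → V → Prop) (u v : V) : Prop :=
  u = v ∨ (Relation.TransGen E u v ∧ Relation.TransGen E v u)

theorem sim_equivalence {V : Type*} (E : V → V → Prop) : Equivalence (sim E) := by
  constructor
  · intro x; exact Or.inl rfl
  · intro x y h
    rcases h with h | ⟨a, b⟩
    · exact Or.inl h.symm
    · exact Or.inr ⟨b, a⟩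
  · intro x y z h1 h2
    rcases h1 with h1 | ⟨a, b⟩
    · subst h1; exact h2
    · rcases h2 with h2 | ⟨c, d⟩
      · subst h2; exact Or.inr ⟨a, b⟩
      · exact Or.inr ⟨a.trans c, d.trans b⟩

def simSetoid {V : Type*} (E : V → V → Prop) : Setoid V :=
  ⟨sim E, sim_equivalence E⟩

noncomputable instance {V : Type*} [Fintype V] (E : V → V → Prop) :
    Fintype (Quotient (simSetoid E)) :=
  Fintype.ofFinite _

def clsLe {V : Type*} (E : V → V → Prop) (c d : Quotient (simSetoid E)) : Prop :=
  c = d ∨ ∃ u v, Quotient.mk (simSetoid E) u = c ∧ Quotient.mk (simSetoid E) v = d ∧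
    Relation.TransGen E v u

noncomputable def clsWt {V : Type*} [Fintype V] (E : V → V → Prop)
    (c : Quotient (simSetoid E)) : ℕ :=
  (Finset.univ.filter (fun v => Quotient.mk (simSetoid E) v = c)).card

noncomputable def phiTilde {V : Type*} (E : V → V → Prop) (x : V → ZMod 2) :
    Quotient (simSetoid E) → ZMod 2 :=
  fun c => if ∀ v, Quotient.mk (simSetoid E) v = c → x v = 0 then 0 else 1

theorem stmt_2 {n : ℕ} (E : Fin n → Fin n → Prop) (hirrefl : ∀ v, ¬ E v v)
    (x : Fin n → ZMod 2) :
    wtG E x = wtP (clsLe E) (clsWt E) (phiTilde E x) ∧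
    (∀ v : Fin n,
      (∃ u, x u ≠ 0 ∧ Relation.ReflTransGen E u v) ↔
      (∃ d, phiTilde E x d ≠ 0 ∧ clsLe E (Quotient.mk (simSetoid E) v) d)) := by

  have hphi : ∀ d, phiTilde E x d ≠ 0 ↔
      ∃ u, Quotient.mk (simSetoid E) u = d ∧ x u ≠ 0 := by
    intro d
    have h1 : phiTilde E x d ≠ 0 ↔ ¬ ∀ v, Quotient.mk (simSetoid E) v = d → x v = 0 := by
      unfold phiTilde
      split <;> simp [*] <;> assumption
    rw [h1]
    push_neg
    rfl
  have key : ∀ v : Fin n,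
      (∃ u, x u ≠ 0 ∧ Relation.ReflTransGen E u v) ↔
      (∃ d, phiTilde E x d ≠ 0 ∧ clsLe E (Quotient.mk (simSetoid E) v) d) := by
    intro v
    constructor
    · rintro ⟨u, hx, hpath⟩
      refine ⟨Quotient.mk (simSetoid E) u, (hphi _).2 ⟨u, rfl, hx⟩, ?_⟩
      rcases Relation.reflTransGen_iff_eq_or_transGen.1 hpath with h | h
      · left; rw [h]
      · right; exact ⟨v, u, rfl, rfl, h⟩
    · rintro ⟨d, hd, hle⟩
      obtain ⟨u, hu, hx⟩ := (hphi d).1 hd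
      rcases hle with h | ⟨a, b, ha, hb, hba⟩
      · have hsim : sim E u v := Quotient.exact (hu.trans h.symm)
        rcases hsim with h' | ⟨h1, _⟩
        · exact ⟨u, hx, h' ▸ Relation.ReflTransGen.refl⟩
        · exact ⟨u, hx, h1.to_reflTransGen⟩
      · have hub : Relation.ReflTransGen E u b := by
          have hsim : sim E u b := Quotient.exact (hu.trans hb.symm)
          rcases hsim with h' | ⟨h1, _⟩
          · exact h' ▸ Relation.ReflTransGen.refl
          · exact h1.to_reflTransGen
        have hav : Relation.ReflTransGen E a v := by
          have hsim : sim E a v := Quotient.exact ha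
          rcases hsim with h' | ⟨h1, _⟩
          · exact h' ▸ Relation.ReflTransGen.refl
          · exact h1.to_reflTransGen
        exact ⟨u, hx, hub.trans (hba.to_reflTransGen.trans hav)⟩
  refine ⟨?_, key⟩
  unfold wtG wtP
  rw [Finset.card_eq_sum_card_fiberwise
    (f := fun v => Quotient.mk (simSetoid E) v)
    (t := Finset.univ.filter (fun j => ∃ i, phiTilde E x i ≠ 0 ∧ clsLe E j i))
    (fun v hv => by
      simp only [Finset.mem_coe, Finset.mem_filter, Finset.mem_univ, true_and] at hv ⊢
      exact (key v).1 hv)]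
  apply Finset.sum_congr rfl
  intro j hj
  unfold clsWt
  congr 1
  ext v
  simp only [Finset.mem_filter, Finset.mem_univ, true_and]
  constructor
  · rintro ⟨_, h⟩; exact h
  · intro h
    refine ⟨(key v).2 ?_, h⟩
    rw [h]
    exact (Finset.mem_filter.1 hj).2
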